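/- K'(x) < 0 for all x > 0, where K'(x) = -(√π/2)(e^{-x²}/x²)·erfi(x) - √π·e^{-x²}·erfi(x) + 1/x. -/

import Mathlib

open MeasureTheory

/-- The imaginary error function erfi(x) = (2/√π) ∫₀ˣ e^{t²} dt. -/
noncomputable def erfi (x : ℝ) : ℝ :=
  (2 / Real.sqrt Real.pi) * ∫ t in (0:ℝ)..x, Real.exp (t^2)

/-- The derivative expression of K(x) = (√π/2)(e^{-x²}/x)·erfi(x):
K'(x) = -(√π/2)(e^{-x²}/x²)·erfi(x) - √π·e^{-x²}·erfi(x) + 1/x. -/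
noncomputable def K' (x : ℝ) : ℝ :=
  -(Real.sqrt Real.pi / 2) * (Real.exp (-x^2) / x^2) * erfi x
    - Real.sqrt Real.pi * Real.exp (-x^2) * erfi x + 1 / x

noncomputable def Ifun (x : ℝ) : ℝ := ∫ t in (0:ℝ)..x, Real.exp (t^2)

lemma cont_exp_sq : Continuous fun t : ℝ => Real.exp (t^2) :=
  Real.continuous_exp.comp (continuous_pow 2)

lemma hasDerivAt_Ifun (x : ℝ) : HasDerivAt Ifun (Real.exp (x^2)) x :=
  (cont_exp_sq.integral_hasStrictDerivAt 0 x).hasDerivAt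

lemma Ifun_pos {x : ℝ} (hx : 0 < x) : 0 < Ifun x := by
  apply intervalIntegral.intervalIntegral_pos_of_pos (f := fun t => Real.exp (t^2))
  · exact (cont_exp_sq.intervalIntegrable 0 x)
  · intro t; exact Real.exp_pos _
  · exact hx

noncomputable def f (x : ℝ) : ℝ := (1 + 2 * x^2) * Ifun x - x * Real.exp (x^2)

lemma f_pos {x : ℝ} (hx : 0 < x) : 0 < f x := by
  have hderiv : ∀ y : ℝ, HasDerivAt f (4 * y * Ifun y) y := by
    intro y
    have h1 := (((hasDerivAt_pow 2 y).const_mul 2).const_add 1).mul (hasDerivAt_Ifun y)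
    have h2 := (hasDerivAt_id y).mul ((hasDerivAt_pow 2 y).exp)
    have := h1.sub h2
    simp only [id_eq] at this
    refine this.congr_deriv ?_
    push_cast
    ring
  have hmono : StrictMonoOn f (Set.Ici (0:ℝ)) := by
    apply strictMonoOn_of_deriv_pos (convex_Ici 0)
    · have : Continuous f := by
        rw [continuous_iff_continuousAt]
        exact fun y => (hderiv y).continuousAt
      exact this.continuousOn
    · intro y hy
      rw [interior_Ici] at hy
      rw [(hderiv y).deriv]
      exact mul_pos (by have := Set.mem_Ioi.mp hy; linarith) (Ifun_pos hy)
  have h0 : f 0 = 0 := by simp [f, Ifun]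
  have := hmono (Set.self_mem_Ici) (Set.mem_Ici.mpr hx.le) hx
  rwa [h0] at this

theorem K'_neg : ∀ x : ℝ, 0 < x → K' x < 0 := by
  intro x hx
  have hπ : (0:ℝ) < Real.sqrt Real.pi := Real.sqrt_pos.mpr Real.pi_pos
  have he : erfi x = 2 * Ifun x / Real.sqrt Real.pi := by
    rw [erfi]; field_simp [Ifun]; rfl
  have hexp : Real.exp (-x^2) * Real.exp (x^2) = 1 := by
    rw [← Real.exp_add]; ring_nf; exact Real.exp_zero
  have hK : K' x = (x - Real.exp (-x^2) * ((1 + 2*x^2) * Ifun x)) / x^2 := by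
    rw [K', he]
    field_simp
    ring_nf
  have key : x < Real.exp (-x^2) * ((1 + 2*x^2) * Ifun x) := by
    have hf := f_pos hx
    have h1 : x * Real.exp (x^2) < (1 + 2*x^2) * Ifun x := by
      have : f x = (1 + 2*x^2) * Ifun x - x * Real.exp (x^2) := rfl
      linarith
    nlinarith [Real.exp_pos (-x^2), mul_lt_mul_of_pos_left h1 (Real.exp_pos (-x^2))]
  rw [hK]
  exact div_neg_of_neg_of_pos (by linarith) (by positivity)
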